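/- (Uniform lower-tail exponential bound under the alternative.) For each ε ∈ (0,1) let F_ε be a finite index set, (ω_{ε,k})_{k∈F_ε} positive weights with Σ_{k∈F_ε} ω_{ε,k}² = 1/2, and A_ε ⊆ ℝ^{F_ε} a set of mean vectors. For θ ∈ A_ε let X_k = θ_k + ε ξ_k with (ξ_k) i.i.d. standard normal, t_ε(θ) = Σ_{k∈F_ε} ω_{ε,k}[(X_k/ε)² − 1], and m_ε(θ) = E_θ t_ε(θ) = ε^{−2} Σ_k ω_{ε,k} θ_k². Suppose T_ε → −∞, T_ε · max_k ω_{ε,k} → 0, and sup_{θ∈A_ε} m_ε(θ) · max_k ω_{ε,k} → 0 as ε → 0. Then, uniformly in θ ∈ A_ε, P_θ( t_ε(θ) − m_ε(θ) ≤ T_ε ) ≤ exp(−(T_ε²/2)(1+o(1))) as ε → 0; i.e. limsup_{ε→0} sup_{θ∈A_ε} T_ε^{−2} log P_θ(t_ε(θ) − m_ε(θ) ≤ T_ε) ≤ −1/2. -/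

import Mathlib

set_option maxHeartbeats 1000000

open MeasureTheory ProbabilityTheory Filter Real Set
open scoped Topology ENNReal NNReal

lemma aux_log_one_add {x : ℝ} (h0 : 0 ≤ x) (h1 : x ≤ 1/2) :
    x - x^2/2 ≤ Real.log (1+x) := by
  rw [Real.le_log_iff_exp_le (by linarith)]
  have ht0 : 0 ≤ x - x^2/2 := by nlinarith
  have ht1 : x - x^2/2 ≤ 1 := by nlinarith
  have h := Real.exp_bound' ht0 ht1 (n := 3) (by norm_num)
  have hs : (∑ m ∈ Finset.range 3, (x - x^2/2) ^ m / m.factorial) =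
      1 + (x - x^2/2) + (x - x^2/2)^2/2 := by
    norm_num [Finset.sum_range_succ]
  rw [hs] at h
  refine h.trans ?_
  have : ((3:ℕ).factorial : ℝ) = 6 := by norm_num [Nat.factorial]
  rw [this]
  nlinarith [sq_nonneg x, pow_nonneg h0 3, pow_nonneg h0 4]

lemma aux_integrable_exp_quad {a d : ℝ} (ha : 0 < a) (e : ℝ) :
    Integrable (fun x : ℝ => Real.exp (-(a * (x - d)^2) + e)) := by
  simp_rw [Real.exp_add]
  apply Integrable.mul_const
  have h := (integrable_exp_neg_mul_sq ha).comp_sub_right d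
  simpa [neg_mul] using h

lemma aux_integral_exp_quad {a : ℝ} (ha : 0 < a) (d e : ℝ) :
    ∫ x : ℝ, Real.exp (-(a * (x - d)^2) + e) = Real.sqrt (π / a) * Real.exp e := by
  simp_rw [Real.exp_add]
  rw [integral_mul_const]
  congr 1
  have h := integral_sub_right_eq_self (μ := volume) (fun y : ℝ => Real.exp (-a * y^2)) d
  simp only [neg_mul] at h ⊢
  rw [h]
  simpa [neg_mul] using integral_gaussian a

lemma aux_gauss_mgf_sq (θ : ℝ) {v : ℝ} (hv : 0 < v) {c : ℝ} (hc : c ≤ 0) :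
    ∫ x, Real.exp (c * x ^ 2) ∂(gaussianReal θ v.toNNReal) =
      (Real.sqrt (1 - 2 * v * c))⁻¹ * Real.exp (c * θ ^ 2 / (1 - 2 * v * c)) := by
  have hv0 : v.toNNReal ≠ 0 := by simp [Real.toNNReal_eq_zero, not_le, hv]
  have hvc : (v.toNNReal : ℝ) = v := Real.coe_toNNReal v hv.le
  have hD : 0 < 1 - 2 * v * c := by nlinarith
  rw [gaussianReal_of_var_ne_zero _ hv0, gaussianPDF_def]
  have hrw : ∫ x, Real.exp (c * x ^ 2)
        ∂(volume.withDensity (fun x => ENNReal.ofReal (gaussianPDFReal θ v.toNNReal x))) =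
      ∫ x, (gaussianPDFReal θ v.toNNReal x).toNNReal • Real.exp (c * x ^ 2) :=
    integral_withDensity_eq_integral_smul
      ((measurable_gaussianPDFReal θ v.toNNReal).real_toNNReal) _
  rw [hrw]
  have hpt : ∀ x : ℝ, (Real.toNNReal (gaussianPDFReal θ v.toNNReal x)) • Real.exp (c * x ^ 2)
      = (Real.sqrt (2 * π * v))⁻¹ *
        Real.exp (-((1 - 2*v*c)/(2*v) * (x - θ/(1 - 2*v*c))^2) + c * θ^2 / (1 - 2*v*c)) := by
    intro x
    rw [NNReal.smul_def, smul_eq_mul, Real.coe_toNNReal _ (gaussianPDFReal_nonneg _ _ _)]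
    rw [gaussianPDFReal, hvc, mul_assoc, ← Real.exp_add]
    congr 1
    have := hD.ne'; have := hv.ne'
    rw [Real.exp_eq_exp]
    field_simp
    ring
  simp_rw [hpt]
  rw [integral_const_mul, aux_integral_exp_quad (by positivity) _ _]
  have hπv : (0:ℝ) < 2 * π * v := by positivity
  have h1 : Real.sqrt (π / ((1 - 2*v*c)/(2*v))) =
      Real.sqrt (2 * π * v) / Real.sqrt (1 - 2*v*c) := by
    rw [← Real.sqrt_div hπv.le]
    congr 1
    field_simp
  rw [h1]
  have h2 : Real.sqrt (2 * π * v) ≠ 0 := by positivity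
  field_simp

lemma aux_integral_pi_prod {ι : Type*} [Fintype ι] (μ : ι → Measure ℝ)
    [∀ i, SigmaFinite (μ i)] (f : ι → ℝ → ℝ) :
    ∫ x : ι → ℝ, ∏ i, f i (x i) ∂(Measure.pi μ) = ∏ i, ∫ y, f i y ∂(μ i) := by
  letI M : ∀ i : ι, MeasureSpace ((fun _ : ι => ℝ) i) := fun i => { volume := μ i }
  letI S : ∀ i : ι, SigmaFinite (M i).volume := fun i => by
    show SigmaFinite (μ i); infer_instance
  exact integral_fintype_prod_eq_prod (μ := μ) f

lemma aux_gaussianReal_isOpenPosMeasure (θ : ℝ) {v : ℝ≥0} (hv : v ≠ 0) :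
    (gaussianReal θ v).IsOpenPosMeasure := by
  constructor
  intro U hU hne h0
  rw [gaussianReal_of_var_ne_zero _ hv, withDensity_apply _ hU.measurableSet] at h0
  rw [lintegral_eq_zero_iff (measurable_gaussianPDF θ v)] at h0
  have h2 := ae_iff.mp h0
  have h3 : {a | ¬ gaussianPDF θ v a = (0 : ℝ → ℝ≥0∞) a} = Set.univ := by
    ext x; simp [(gaussianPDF_pos θ hv x).ne']
  rw [h3, Measure.restrict_apply_univ] at h2
  exact (hU.measure_pos volume hne).ne' h2

lemma aux_factor_bound {w p : ℝ} (hw0 : 0 ≤ w) (hw4 : w ≤ 1/4) (hp0 : 0 ≤ p) :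
    Real.exp w * ((Real.sqrt (1 + 2*w))⁻¹ * Real.exp (-(w*p) / (1 + 2*w))) ≤
      Real.exp (w^2 - w*p + 2*w^2*p) := by
  have hDpos : (0:ℝ) < 1 + 2*w := by linarith
  have hlog := aux_log_one_add (x := 2*w) (by linarith) (by linarith)
  have h22 : (2*w)^2/2 = 2*w^2 := by ring
  rw [h22] at hlog
  have hsqrt : (Real.sqrt (1 + 2*w))⁻¹ = Real.exp (-(Real.log (1 + 2*w) / 2)) := by
    rw [Real.sqrt_eq_rpow, Real.rpow_def_of_pos hDpos, ← Real.exp_neg]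
    congr 1
    ring
  rw [hsqrt, ← Real.exp_add, ← Real.exp_add, Real.exp_le_exp]
  have hfrac : w * p - w * p / (1 + 2*w) ≤ 2 * w^2 * p := by
    have heq : w * p - w * p / (1 + 2*w) = (2 * w^2 * p) / (1 + 2*w) := by
      field_simp
      ring
    rw [heq]
    exact div_le_self (by positivity) (by linarith)
  have hdivle : -(w*p) / (1 + 2*w) = -(w * p / (1 + 2*w)) := by ring_nf
  rw [hdivle]
  linarith [hlog, hfrac]

theorem lower_tail_bound_alternative
    (ι : Type*) (F : ℝ → Finset ι) (ω : ℝ → ι → ℝ)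
    (hωpos : ∀ᶠ ε in 𝓝[>] (0 : ℝ), ∀ k ∈ F ε, 0 < ω ε k)
    (hωnorm : ∀ᶠ ε in 𝓝[>] (0 : ℝ), ∑ k ∈ F ε, (ω ε k) ^ 2 = 1 / 2)
    (A : (ε : ℝ) → Set (↥(F ε) → ℝ))
    (T : ℝ → ℝ) (hT : Tendsto T (𝓝[>] (0 : ℝ)) atBot)
    (hTω : ∀ κ > (0 : ℝ), ∀ᶠ ε in 𝓝[>] (0 : ℝ), ∀ k ∈ F ε, |T ε| * ω ε k < κ)
    (hmω : ∀ κ > (0 : ℝ), ∀ᶠ ε in 𝓝[>] (0 : ℝ), ∀ θ ∈ A ε, ∀ k ∈ F ε,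
      ((∑ j : ↥(F ε), ω ε ↑j * (θ j) ^ 2) / ε ^ 2) * ω ε k < κ) :
    ∀ b : ℝ, -(1 / 2 : ℝ) < b → ∀ᶠ ε in 𝓝[>] (0 : ℝ), ∀ θ ∈ A ε,
      Real.log (((Measure.pi fun k : ↥(F ε) =>
            gaussianReal (θ k) ((ε ^ 2).toNNReal))
          {x | (∑ k : ↥(F ε), ω ε ↑k * ((x k / ε) ^ 2 - 1))
                - (∑ j : ↥(F ε), ω ε ↑j * (θ j) ^ 2) / ε ^ 2 ≤ T ε}).toReal)
        ≤ b * (T ε) ^ 2 := by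
  intro b hb
  set κ : ℝ := (b + 1/2)/2 with hκdef
  have hκpos : 0 < κ := by simp only [hκdef]; linarith
  have hTneg : ∀ᶠ ε in 𝓝[>] (0:ℝ), T ε ≤ -1 := hT.eventually (eventually_le_atBot (-1))
  have hself : ∀ᶠ ε in 𝓝[>] (0:ℝ), 0 < ε :=
    eventually_mem_nhdsWithin.mono (fun x hx => hx)
  filter_upwards [hωpos, hωnorm, hTneg, hTω (1/4) (by norm_num), hmω κ hκpos, hself] with
    ε hpos hnorm hTle hT4 hmκ hε
  intro θ hθ
  -- basic setup
  have hε2 : (0:ℝ) < ε ^ 2 := by positivity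
  have hεne : (ε:ℝ) ≠ 0 := hε.ne'
  set v : ℝ≥0 := (ε ^ 2).toNNReal with hvdef
  have hv0 : v ≠ 0 := by
    simp only [hvdef, ne_eq, Real.toNNReal_eq_zero, not_le]; exact hε2
  set L : ℝ := -T ε with hLdef
  have hL1 : 1 ≤ L := by simp only [hLdef]; linarith
  have hL0 : 0 < L := lt_of_lt_of_le one_pos hL1
  have habsT : |T ε| = L := by rw [abs_of_neg (by linarith : T ε < 0)]
  set m : ℝ := (∑ j : ↥(F ε), ω ε ↑j * (θ j) ^ 2) / ε ^ 2 with hmdef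
  set g : (↥(F ε) → ℝ) → ℝ :=
    fun x => (∑ k : ↥(F ε), ω ε ↑k * ((x k / ε) ^ 2 - 1)) - m with hgdef
  set μpi : Measure (↥(F ε) → ℝ) :=
    Measure.pi fun k : ↥(F ε) => gaussianReal (θ k) v with hμdef
  -- per-index facts
  have hωk : ∀ k : ↥(F ε), 0 < ω ε ↑k := fun k => hpos k k.2
  have hLω : ∀ k : ↥(F ε), L * ω ε ↑k < 1/4 := fun k => habsT ▸ hT4 k k.2
  have hmk : ∀ k : ↥(F ε), m * ω ε ↑k < κ := fun k => hmκ θ hθ k k.2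
  have hm0 : 0 ≤ m := by
    apply div_nonneg _ hε2.le
    exact Finset.sum_nonneg fun k _ => mul_nonneg (hωk k).le (sq_nonneg _)
  have hSum2 : ∑ k : ↥(F ε), (ω ε ↑k) ^ 2 = 1/2 := by
    rw [Finset.sum_coe_sort (F ε) (fun k => (ω ε k) ^ 2)]; exact hnorm
  set S : ℝ := ∑ k : ↥(F ε), ω ε ↑k with hSdef
  have hS2L : 2 * L ≤ S := by
    have h1 : ∑ k : ↥(F ε), (ω ε ↑k) ^ 2 ≤ ∑ k : ↥(F ε), ω ε ↑k * (1/(4*L)) :=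
      Finset.sum_le_sum fun k _ => by
        have h1 := hLω k; have h2 := hωk k
        rw [sq]
        apply mul_le_mul_of_nonneg_left _ h2.le
        rw [le_div_iff₀ (by positivity)]
        nlinarith
    rw [hSum2, ← Finset.sum_mul, mul_one_div, le_div_iff₀ (by positivity)] at h1
    linarith
  -- continuity of g
  have hgcont : Continuous g := by
    apply Continuous.sub _ continuous_const
    apply continuous_finset_sum
    intro k _
    exact continuous_const.mul
      (by fun_prop)
  -- positivity of the probability
  haveI hOP : ∀ k : ↥(F ε), (gaussianReal (θ k) v).IsOpenPosMeasure :=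
    fun k => aux_gaussianReal_isOpenPosMeasure (θ k) hv0
  haveI : μpi.IsOpenPosMeasure := by
    rw [hμdef]; infer_instance
  have hopen : IsOpen {x : ↥(F ε) → ℝ | g x < T ε} :=
    isOpen_lt hgcont continuous_const
  have h0mem : (fun _ => (0:ℝ)) ∈ {x : ↥(F ε) → ℝ | g x < T ε} := by
    simp only [mem_setOf_eq, hgdef]
    have h2 : (∑ k : ↥(F ε), ω ε ↑k * (((0:ℝ) / ε) ^ 2 - 1)) = -S := by
      simp only [zero_div]
      rw [hSdef, ← Finset.sum_neg_distrib]
      exact Finset.sum_congr rfl fun k _ => by ring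
    rw [h2]
    have h3 : T ε = -L := by rw [hLdef]; ring
    rw [h3]
    linarith
  have hppos : 0 < μpi {x : ↥(F ε) → ℝ | g x < T ε} :=
    hopen.measure_pos μpi ⟨_, h0mem⟩
  have hPpos : 0 < (μpi {x : ↥(F ε) → ℝ | g x ≤ T ε}).toReal := by
    apply ENNReal.toReal_pos
    · exact (lt_of_lt_of_le hppos
        (measure_mono fun x (hx : g x < T ε) => le_of_lt hx)).ne'
    · exact measure_ne_top _ _
  -- Chernoff
  haveI : IsProbabilityMeasure μpi := by rw [hμdef]; infer_instance
  have hglb : ∀ x : ↥(F ε) → ℝ, -(S + m) ≤ g x := by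
    intro x
    have h1 : ∑ k : ↥(F ε), ω ε ↑k * (-1:ℝ) ≤
        ∑ k : ↥(F ε), ω ε ↑k * ((x k / ε) ^ 2 - 1) :=
      Finset.sum_le_sum fun k _ => by
        apply mul_le_mul_of_nonneg_left _ (hωk k).le
        nlinarith [sq_nonneg (x k / ε)]
    simp only [hgdef]
    have h2 : ∑ k : ↥(F ε), ω ε ↑k * (-1:ℝ) = -S := by
      rw [hSdef, ← Finset.sum_neg_distrib]
      exact Finset.sum_congr rfl fun k _ => by ring
    rw [h2] at h1
    linarith
  have hint : Integrable (fun x => Real.exp (-L * g x)) μpi := by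
    apply Integrable.mono' (integrable_const (Real.exp (L * (S + m))))
    · exact (Real.continuous_exp.comp (continuous_const.mul hgcont)).aestronglyMeasurable
    · apply ae_of_all
      intro x
      rw [Real.norm_eq_abs, abs_of_pos (Real.exp_pos _), Real.exp_le_exp]
      nlinarith [hglb x]
  have hcher := measure_le_le_exp_mul_mgf (μ := μpi) (X := g) (t := -L) (T ε)
    (by linarith) hint
  -- per-coordinate mgf bound
  have hQk : ∀ k : ↥(F ε),
      ∫ y, Real.exp (-(L * ω ε ↑k) * ((y / ε) ^ 2 - 1)) ∂(gaussianReal (θ k) v) ≤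
        Real.exp ((L * ω ε ↑k)^2 - (L * ω ε ↑k) * ((θ k)^2 / ε^2)
          + 2 * (L * ω ε ↑k)^2 * ((θ k)^2 / ε^2)) := by
    intro k
    have hw0 : 0 ≤ L * ω ε ↑k := le_of_lt (mul_pos hL0 (hωk k))
    have hw4 : L * ω ε ↑k ≤ 1/4 := (hLω k).le
    have hc0 : -(L * ω ε ↑k) / ε^2 ≤ 0 :=
      div_nonpos_of_nonpos_of_nonneg (by linarith) hε2.le
    have hpt : ∀ y : ℝ, Real.exp (-(L * ω ε ↑k) * ((y / ε) ^ 2 - 1)) =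
        Real.exp (L * ω ε ↑k) * Real.exp ((-(L * ω ε ↑k) / ε^2) * y^2) := by
      intro y
      rw [← Real.exp_add]
      congr 1
      rw [div_pow]
      field_simp
      ring
    simp_rw [hpt]
    rw [integral_const_mul, aux_gauss_mgf_sq (θ k) hε2 hc0]
    have hD : 1 - 2 * ε^2 * (-(L * ω ε ↑k) / ε^2) = 1 + 2*(L * ω ε ↑k) := by
      field_simp
      ring
    rw [hD]
    have hnum : (-(L * ω ε ↑k) / ε^2) * (θ k)^2 = -((L * ω ε ↑k) * ((θ k)^2 / ε^2)) := by
      field_simp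
    rw [hnum]
    exact aux_factor_bound hw0 hw4 (div_nonneg (sq_nonneg _) hε2.le)
  -- mgf as a product
  have hmgf : mgf g μpi (-L) = Real.exp (L * m) *
      ∏ k : ↥(F ε), ∫ y, Real.exp (-(L * ω ε ↑k) * ((y / ε) ^ 2 - 1))
        ∂(gaussianReal (θ k) v) := by
    have hpt : ∀ x : ↥(F ε) → ℝ, Real.exp (-L * g x) =
        Real.exp (L * m) *
          ∏ k : ↥(F ε), Real.exp (-(L * ω ε ↑k) * ((x k / ε) ^ 2 - 1)) := by
      intro x
      rw [← Real.exp_sum, ← Real.exp_add]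
      congr 1
      have h1 : ∑ k : ↥(F ε), -(L * ω ε ↑k) * ((x k / ε)^2 - 1)
          = -L * ∑ k : ↥(F ε), ω ε ↑k * ((x k / ε)^2 - 1) := by
        rw [Finset.mul_sum]
        exact Finset.sum_congr rfl fun k _ => by ring
      rw [h1]
      simp only [hgdef]
      ring
    have : mgf g μpi (-L) = ∫ x, Real.exp (-L * g x) ∂μpi := rfl
    rw [this]
    simp_rw [hpt]
    rw [integral_const_mul]
    congr 1
    exact aux_integral_pi_prod (fun k => gaussianReal (θ k) v)
      (fun k y => Real.exp (-(L * ω ε ↑k) * ((y / ε) ^ 2 - 1)))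
  -- sum bound
  have hsum_m : ∑ k : ↥(F ε), ω ε ↑k * ((θ k)^2 / ε^2) = m := by
    rw [hmdef, Finset.sum_div]
    exact Finset.sum_congr rfl fun k _ => by ring
  have hkey : ∑ k : ↥(F ε), (ω ε ↑k)^2 * ((θ k)^2 / ε^2) ≤ κ := by
    rcases eq_or_lt_of_le hm0 with hm | hm
    · have hz : ∀ k ∈ (Finset.univ : Finset ↥(F ε)),
          ω ε ↑k * ((θ k)^2 / ε^2) = 0 := by
        rw [← Finset.sum_eq_zero_iff_of_nonneg
          (fun k _ => mul_nonneg (hωk k).le (div_nonneg (sq_nonneg _) hε2.le))]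
        rw [hsum_m]; exact hm.symm
      have h4 : ∑ k : ↥(F ε), (ω ε ↑k)^2 * ((θ k)^2 / ε^2) = 0 := by
        apply Finset.sum_eq_zero
        intro k hk
        have := hz k hk
        have h5 : (ω ε ↑k)^2 * ((θ k)^2 / ε^2) = ω ε ↑k * (ω ε ↑k * ((θ k)^2 / ε^2)) := by
          ring
        rw [h5, this, mul_zero]
      rw [h4]; exact hκpos.le
    · have hstep : ∀ k ∈ (Finset.univ : Finset ↥(F ε)),
          (ω ε ↑k)^2 * ((θ k)^2 / ε^2) ≤ (κ/m) * (ω ε ↑k * ((θ k)^2 / ε^2)) := by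
        intro k _
        have hωle : ω ε ↑k ≤ κ/m := by
          rw [le_div_iff₀ hm]
          nlinarith [hmk k]
        have h5 : (ω ε ↑k)^2 * ((θ k)^2 / ε^2) = ω ε ↑k * (ω ε ↑k * ((θ k)^2 / ε^2)) := by
          ring
        rw [h5]
        apply mul_le_mul_of_nonneg_right hωle
        exact mul_nonneg (hωk k).le (div_nonneg (sq_nonneg _) hε2.le)
      calc ∑ k : ↥(F ε), (ω ε ↑k)^2 * ((θ k)^2 / ε^2)
          ≤ ∑ k : ↥(F ε), (κ/m) * (ω ε ↑k * ((θ k)^2 / ε^2)) := Finset.sum_le_sum hstep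
        _ = (κ/m) * m := by rw [← Finset.mul_sum, hsum_m]
        _ = κ := div_mul_cancel₀ κ hm.ne'
  have hsum_bound : ∑ k : ↥(F ε), ((L * ω ε ↑k)^2 - (L * ω ε ↑k) * ((θ k)^2 / ε^2)
      + 2 * (L * ω ε ↑k)^2 * ((θ k)^2 / ε^2)) ≤ L^2/2 - L*m + 2*L^2*κ := by
    have e1 : ∑ k : ↥(F ε), (L * ω ε ↑k)^2 = L^2 * (1/2) := by
      simp_rw [mul_pow]
      rw [← Finset.mul_sum, hSum2]
    have e2 : ∑ k : ↥(F ε), (L * ω ε ↑k) * ((θ k)^2 / ε^2) = L * m := by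
      rw [← hsum_m, Finset.mul_sum]
      exact Finset.sum_congr rfl fun k _ => by ring
    have e3 : ∑ k : ↥(F ε), 2 * (L * ω ε ↑k)^2 * ((θ k)^2 / ε^2) ≤ 2*L^2*κ := by
      have h6 : ∀ k : ↥(F ε), 2 * (L * ω ε ↑k)^2 * ((θ k)^2 / ε^2)
          = (2*L^2) * ((ω ε ↑k)^2 * ((θ k)^2 / ε^2)) := fun k => by ring
      simp_rw [h6]
      rw [← Finset.mul_sum]
      calc (2*L^2) * ∑ k : ↥(F ε), (ω ε ↑k)^2 * ((θ k)^2 / ε^2)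
          ≤ (2*L^2) * κ := by
            apply mul_le_mul_of_nonneg_left hkey (by positivity)
        _ = 2*L^2*κ := by ring
    rw [Finset.sum_add_distrib, Finset.sum_sub_distrib, e1, e2]
    linarith
  -- final assembly
  have hfinal : (μpi {x : ↥(F ε) → ℝ | g x ≤ T ε}).toReal ≤ Real.exp (b * (T ε)^2) := by
    refine hcher.trans ?_
    rw [hmgf]
    have h5 : (∏ k : ↥(F ε), ∫ y, Real.exp (-(L * ω ε ↑k) * ((y / ε) ^ 2 - 1))
        ∂(gaussianReal (θ k) v)) ≤ Real.exp (L^2/2 - L*m + 2*L^2*κ) := by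
      calc (∏ k : ↥(F ε), ∫ y, Real.exp (-(L * ω ε ↑k) * ((y / ε) ^ 2 - 1))
            ∂(gaussianReal (θ k) v))
          ≤ ∏ k : ↥(F ε), Real.exp ((L * ω ε ↑k)^2 - (L * ω ε ↑k) * ((θ k)^2 / ε^2)
              + 2 * (L * ω ε ↑k)^2 * ((θ k)^2 / ε^2)) :=
            Finset.prod_le_prod
              (fun k _ => integral_nonneg fun y => (Real.exp_pos _).le)
              (fun k _ => hQk k)
        _ = Real.exp (∑ k : ↥(F ε), ((L * ω ε ↑k)^2 - (L * ω ε ↑k) * ((θ k)^2 / ε^2)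
              + 2 * (L * ω ε ↑k)^2 * ((θ k)^2 / ε^2))) := (Real.exp_sum _ _).symm
        _ ≤ Real.exp (L^2/2 - L*m + 2*L^2*κ) := Real.exp_le_exp.mpr hsum_bound
    calc Real.exp (- -L * T ε) * (Real.exp (L * m) *
          ∏ k : ↥(F ε), ∫ y, Real.exp (-(L * ω ε ↑k) * ((y / ε) ^ 2 - 1))
            ∂(gaussianReal (θ k) v))
        ≤ Real.exp (- -L * T ε) * (Real.exp (L * m) * Real.exp (L^2/2 - L*m + 2*L^2*κ)) := by
          apply mul_le_mul_of_nonneg_left _ (Real.exp_pos _).le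
          exact mul_le_mul_of_nonneg_left h5 (Real.exp_pos _).le
      _ ≤ Real.exp (b * (T ε)^2) := by
          rw [← Real.exp_add, ← Real.exp_add, Real.exp_le_exp]
          have h7 : - -L * T ε = -L^2 := by rw [hLdef]; ring
          have h8 : (T ε)^2 = L^2 := by rw [hLdef]; ring
          have h9 : 2*κ = b + 1/2 := by rw [hκdef]; ring
          rw [h7, h8]
          nlinarith [sq_nonneg L]
  have hsets : {x : ↥(F ε) → ℝ | g x ≤ T ε} =
      {x : ↥(F ε) → ℝ |
        (∑ k : ↥(F ε), ω ε ↑k * ((x k / ε) ^ 2 - 1)) - m ≤ T ε} := by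
    simp only [hgdef]
  rw [← hsets]
  exact (Real.log_le_iff_le_exp hPpos).mpr hfinal
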